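/- Let μ be the product distribution on {0,1}^n with marginals p_i, and let C be an extremal set of constraints with μ(all constraints satisfied) > 0. Then the partial rejection sampling algorithm terminates with probability 1, and its output distribution is exactly μ conditioned on all constraints being satisfied. -/

import Mathlib

open scoped Classical
open Filter

/-- The set of variables appearing in some constraint violated by `x`. -/
noncomputable def resampleSet {n L : ℕ} (c : Fin L → (Fin n → Bool) → Bool)
    (var : Fin L → Finset (Fin n)) (x : Fin n → Bool) : Finset (Fin n) :=
  Finset.univ.filter (fun i => ∃ j, c j x = false ∧ i ∈ var j)

/-- The state of the partial rejection sampling algorithm at round `t`, driven by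
the random tape `u`. -/
noncomputable def stateAt {n L : ℕ} (c : Fin L → (Fin n → Bool) → Bool)
    (var : Fin L → Finset (Fin n)) (u : ℕ → (Fin n → Bool)) : ℕ → (Fin n → Bool)
  | 0 => u 0
  | t + 1 => fun i =>
      if i ∈ resampleSet c var (stateAt c var u t) then u (t + 1) i
      else stateAt c var u t i

/-- Extend a finite tape prefix to an infinite tape (arbitrarily beyond). -/
def extTape {n t : ℕ} (w : Fin (t + 1) → (Fin n → Bool)) : ℕ → (Fin n → Bool) :=
  fun s => if h : s < t + 1 then w ⟨s, h⟩ else fun _ => false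

/-- Probability of a finite tape prefix under independent marginals `p`. -/
noncomputable def tapeProb {n t : ℕ} (p : Fin n → ℝ)
    (w : Fin (t + 1) → (Fin n → Bool)) : ℝ :=
  ∏ s, ∏ i, (if w s i then p i else 1 - p i)

namespace PRS

variable {n L : ℕ}

noncomputable def wt (p : Fin n → ℝ) (i : Fin n) (b : Bool) : ℝ :=
  if b then p i else 1 - p i

noncomputable def nu (p : Fin n → ℝ) (x : Fin n → Bool) : ℝ := ∏ i, wt p i (x i)

noncomputable def Vio (c : Fin L → (Fin n → Bool) → Bool) (x : Fin n → Bool) :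
    Finset (Fin L) := Finset.univ.filter (fun j => c j x = false)

noncomputable def Rset (var : Fin L → Finset (Fin n)) (S : Finset (Fin L)) :
    Finset (Fin n) := S.biUnion var

noncomputable def qS (p : Fin n → ℝ) (c : Fin L → (Fin n → Bool) → Bool)
    (S : Finset (Fin L)) : ℝ :=
  ∑ x : Fin n → Bool, if ∀ j ∈ S, c j x = false then nu p x else 0

noncomputable def K (p : Fin n → ℝ) (R : Finset (Fin n)) (x y : Fin n → Bool) : ℝ :=
  (if ∀ i, i ∉ R → x i = y i then (1:ℝ) else 0) * ∏ i ∈ R, wt p i (y i)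

noncomputable def beta (p : Fin n → ℝ) (c : Fin L → (Fin n → Bool) → Bool)
    (var : Fin L → Finset (Fin n)) : ℕ → Finset (Fin L) → ℝ
  | 0, _ => 1
  | t + 1, T => ∑ S : Finset (Fin L),
      if (∃ x, Vio c x = S) ∧ S.Nonempty ∧
          (∀ j ∈ T, (var j ∩ Rset var S).Nonempty) then
        qS p c S * beta p c var t S
      else 0

noncomputable def FF (p : Fin n → ℝ) (c : Fin L → (Fin n → Bool) → Bool)
    (var : Fin L → Finset (Fin n)) (t : ℕ) (x : Fin n → Bool) : ℝ :=
  ∑ w : Fin (t + 1) → (Fin n → Bool),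
    tapeProb p w *
      (if ((∀ s : Fin (t + 1), (s : ℕ) < t →
            ∃ j, c j (stateAt c var (extTape w) (s : ℕ)) = false) ∧
          stateAt c var (extTape w) t = x)
        then (1 : ℝ) else 0)

/-! ### generic indicator / product lemmas -/

lemma prod_ind {α : Type*} (s : Finset α) (P : α → Prop) [DecidablePred P] :
    (∏ i ∈ s, if P i then (1:ℝ) else 0) = if ∀ i ∈ s, P i then 1 else 0 := by
  by_cases h : ∀ i ∈ s, P i
  · rw [if_pos h, Finset.prod_eq_one]
    intro i hi; rw [if_pos (h i hi)]
  · rw [if_neg h]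
    push_neg at h
    obtain ⟨i, hi, hPi⟩ := h
    exact Finset.prod_eq_zero hi (by rw [if_neg hPi])

lemma ind_mul_ind (A B : Prop) [Decidable A] [Decidable B] :
    (if A then (1:ℝ) else 0) * (if B then 1 else 0) = if A ∧ B then 1 else 0 := by
  by_cases hA : A <;> by_cases hB : B <;> simp [hA, hB]

lemma sum_pi_bool (f : Fin n → Bool → ℝ) :
    ∑ x : Fin n → Bool, ∏ i, f i (x i) = ∏ i, (f i true + f i false) := by
  have h := Finset.prod_univ_sum (fun _ : Fin n => (Finset.univ : Finset Bool)) f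
  rw [Fintype.piFinset_univ] at h
  rw [← h]
  refine Finset.prod_congr rfl fun i _ => ?_
  simp [Fintype.sum_bool]

lemma wt_nonneg (p : Fin n → ℝ) (hp : ∀ i, 0 ≤ p i ∧ p i ≤ 1) (i : Fin n) (b : Bool) :
    0 ≤ wt p i b := by
  cases b <;> simp [wt] <;> [linarith [(hp i).2]; exact (hp i).1]

lemma wt_add (p : Fin n → ℝ) (i : Fin n) : wt p i true + wt p i false = 1 := by
  simp [wt]

lemma nu_nonneg (p : Fin n → ℝ) (hp : ∀ i, 0 ≤ p i ∧ p i ≤ 1) (x : Fin n → Bool) :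
    0 ≤ nu p x :=
  Finset.prod_nonneg fun i _ => wt_nonneg p hp i (x i)

lemma sum_nu (p : Fin n → ℝ) : ∑ x : Fin n → Bool, nu p x = 1 := by
  rw [show (fun x : Fin n → Bool => nu p x) = fun x => ∏ i, wt p i (x i) from rfl]
  rw [sum_pi_bool]
  simp [wt_add]

lemma tapeProb_eq {t : ℕ} (p : Fin n → ℝ) (w : Fin (t + 1) → (Fin n → Bool)) :
    tapeProb p w = ∏ s, nu p (w s) := rfl


lemma filter_mem_univ (R : Finset (Fin n)) :
    Finset.univ.filter (fun i => i ∈ R) = R := by ext i; simp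

lemma K_eq_prod (p : Fin n → ℝ) (R : Finset (Fin n)) (x y : Fin n → Bool) :
    K p R x y = ∏ i, (if i ∈ R then wt p i (y i) else if x i = y i then (1:ℝ) else 0) := by
  rw [Finset.prod_ite, filter_mem_univ, prod_ind, K, mul_comm]
  simp only [Finset.mem_filter, Finset.mem_univ, true_and]

lemma sum_merge (p : Fin n → ℝ) (R : Finset (Fin n)) (x y : Fin n → Bool) :
    ∑ z : Fin n → Bool,
      nu p z * (if (fun i => if i ∈ R then z i else x i) = y then (1:ℝ) else 0)
      = K p R x y := by
  have h1 : ∀ z : Fin n → Bool,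
      nu p z * (if (fun i => if i ∈ R then z i else x i) = y then (1:ℝ) else 0)
        = ∏ i, (wt p i (z i) * (if (if i ∈ R then z i else x i) = y i then 1 else 0)) := by
    intro z
    rw [Finset.prod_mul_distrib, nu]
    congr 1
    rw [prod_ind]
    simp only [funext_iff, Finset.mem_univ, true_implies]
  simp only [h1]
  have h2 := sum_pi_bool
    (fun i b => wt p i b * (if (if i ∈ R then b else x i) = y i then (1:ℝ) else 0))
  rw [h2, K_eq_prod]
  refine Finset.prod_congr rfl fun i _ => ?_
  by_cases hiR : i ∈ R
  · simp only [if_pos hiR]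
    cases hy : y i <;> simp [wt] <;> ring
  · simp only [if_neg hiR]
    by_cases hxy : x i = y i <;> simp [hxy, wt] <;> ring

lemma sum_K (p : Fin n → ℝ) (R : Finset (Fin n)) (x : Fin n → Bool) :
    ∑ y : Fin n → Bool, K p R x y = 1 := by
  simp only [K_eq_prod]
  have h2 := sum_pi_bool
    (fun i b => if i ∈ R then wt p i b else if x i = b then (1:ℝ) else 0)
  rw [h2, Finset.prod_eq_one]
  intro i _
  by_cases hiR : i ∈ R
  · simp [hiR, wt]
  · cases hx : x i <;> simp [hiR, hx]

lemma nu_mul_K (p : Fin n → ℝ) (R : Finset (Fin n)) (x y : Fin n → Bool) :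
    nu p x * K p R x y
      = (if ∀ i, i ∉ R → x i = y i then (1:ℝ) else 0) * (nu p y * ∏ i ∈ R, wt p i (x i)) := by
  by_cases h : ∀ i, i ∉ R → x i = y i
  · rw [K, if_pos h, one_mul]
    have hx : nu p x = (∏ i ∈ R, wt p i (x i)) * ∏ i ∈ Rᶜ, wt p i (x i) :=
      (Finset.prod_mul_prod_compl R _).symm
    have hy : nu p y = (∏ i ∈ R, wt p i (y i)) * ∏ i ∈ Rᶜ, wt p i (y i) :=
      (Finset.prod_mul_prod_compl R _).symm
    have hc : ∏ i ∈ Rᶜ, wt p i (x i) = ∏ i ∈ Rᶜ, wt p i (y i) := by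
      refine Finset.prod_congr rfl fun i hi => ?_
      rw [h i (Finset.mem_compl.mp hi)]
    rw [hx, hy, hc]; ring
  · rw [K, if_neg h]; ring


variable {c : Fin L → (Fin n → Bool) → Bool} {var : Fin L → Finset (Fin n)}

lemma mem_Vio {x : Fin n → Bool} {j : Fin L} : j ∈ Vio c x ↔ c j x = false := by
  simp [Vio]

lemma mem_Rset {S : Finset (Fin L)} {i : Fin n} :
    i ∈ Rset var S ↔ ∃ j ∈ S, i ∈ var j := by simp [Rset]

lemma rs_eq (x : Fin n → Bool) : resampleSet c var x = Rset var (Vio c x) := by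
  ext i
  simp [resampleSet, Rset, Vio]

lemma cond_congr (hdep : ∀ j (x y : Fin n → Bool), (∀ i ∈ var j, x i = y i) → c j x = c j y)
    (S : Finset (Fin L)) {x x' : Fin n → Bool}
    (h : ∀ i ∈ Rset var S, x i = x' i) :
    (∀ j ∈ S, c j x = false) ↔ (∀ j ∈ S, c j x' = false) := by
  have key : ∀ j ∈ S, c j x = c j x' := by
    intro j hj
    exact hdep j x x' fun i hi => h i (mem_Rset.mpr ⟨j, hj, hi⟩)
  constructor
  · intro hv j hj; rw [← key j hj]; exact hv j hj
  · intro hv j hj; rw [key j hj]; exact hv j hj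

lemma vio_char (hdep : ∀ j (x y : Fin n → Bool), (∀ i ∈ var j, x i = y i) → c j x = c j y)
    (hextremal : ∀ i j, i ≠ j →
      var i ∩ var j = ∅ ∨ ∀ x : Fin n → Bool, c i x = true ∨ c j x = true)
    (S : Finset (Fin L)) (hvar : ∀ j ∈ S, (var j).Nonempty)
    (x y : Fin n → Bool) (hxy : ∀ i, i ∉ Rset var S → x i = y i) :
    Vio c x = S ↔ ((∀ j ∈ S, c j x = false) ∧
      ∀ j, c j y = false → (var j ∩ Rset var S).Nonempty) := by
  constructor
  · rintro rfl
    refine ⟨fun j hj => mem_Vio.mp hj, fun j hjy => ?_⟩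
    by_contra hemp
    rw [Finset.not_nonempty_iff_eq_empty] at hemp
    have hnR : ∀ i ∈ var j, i ∉ Rset var (Vio c x) := by
      intro i hi hiR
      exact Finset.notMem_empty i (hemp ▸ Finset.mem_inter.mpr ⟨hi, hiR⟩)
    have hxj : c j x = false := by
      rw [hdep j x y fun i hi => hxy i (hnR i hi)]; exact hjy
    have hjS : j ∈ Vio c x := mem_Vio.mpr hxj
    obtain ⟨i, hi⟩ := hvar j hjS
    exact hnR i hi (mem_Rset.mpr ⟨j, hjS, hi⟩)
  · rintro ⟨h1, h2⟩
    ext j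
    rw [mem_Vio]
    constructor
    · intro hjx
      by_contra hjS
      by_cases hne : (var j ∩ Rset var S).Nonempty
      · obtain ⟨i, hi⟩ := hne
        obtain ⟨hij, hiR⟩ := Finset.mem_inter.mp hi
        obtain ⟨j', hj'S, hij'⟩ := mem_Rset.mp hiR
        have hjj' : j ≠ j' := fun h => hjS (h ▸ hj'S)
        rcases hextremal j j' hjj' with hd | ht
        · exact Finset.notMem_empty i (hd ▸ Finset.mem_inter.mpr ⟨hij, hij'⟩)
        · rcases ht x with h | h
          · rw [hjx] at h; exact Bool.false_ne_true h
          · rw [h1 j' hj'S] at h; exact Bool.false_ne_true h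
      · rw [Finset.not_nonempty_iff_eq_empty] at hne
        have hnR : ∀ i ∈ var j, i ∉ Rset var S := by
          intro i hi hiR
          exact Finset.notMem_empty i (hne ▸ Finset.mem_inter.mpr ⟨hi, hiR⟩)
        have hjy : c j y = false := by
          rw [← hdep j x y fun i hi => hxy i (hnR i hi)]; exact hjx
        obtain ⟨i, hi⟩ := h2 j hjy
        obtain ⟨hij, hiR⟩ := Finset.mem_inter.mp hi
        exact hnR i hij hiR
    · exact h1 j

lemma sum_fiber_weight (p : Fin n → ℝ)
    (hdep : ∀ j (x y : Fin n → Bool), (∀ i ∈ var j, x i = y i) → c j x = c j y)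
    (S : Finset (Fin L)) (y : Fin n → Bool) :
    ∑ x : Fin n → Bool, (if ∀ j ∈ S, c j x = false then (1:ℝ) else 0) *
        ((if ∀ i, i ∉ Rset var S → x i = y i then (1:ℝ) else 0) *
          ∏ i ∈ Rset var S, wt p i (x i))
      = qS p c S := by
  set R := Rset var S with hR
  have step1 : qS p c S = ∑ v : Fin n → Bool,
      nu p v * (if ∀ j ∈ S, c j (fun i => if i ∈ R then v i else y i) = false
        then (1:ℝ) else 0) := by
    rw [qS]
    refine Finset.sum_congr rfl fun v _ => ?_
    have : (∀ j ∈ S, c j v = false) ↔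
        (∀ j ∈ S, c j (fun i => if i ∈ R then v i else y i) = false) := by
      refine cond_congr hdep S fun i hi => ?_
      simp [hR, hi]
    by_cases h : ∀ j ∈ S, c j v = false
    · rw [if_pos h, if_pos (this.mp h), mul_one]
    · rw [if_neg h, if_neg (fun h' => h (this.mpr h')), mul_zero]
  rw [step1]
  have step2 : ∀ v : Fin n → Bool,
      nu p v * (if ∀ j ∈ S, c j (fun i => if i ∈ R then v i else y i) = false
        then (1:ℝ) else 0)
      = ∑ x : Fin n → Bool,
          (if ∀ j ∈ S, c j x = false then (1:ℝ) else 0) *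
            (nu p v * (if (fun i => if i ∈ R then v i else y i) = x then (1:ℝ) else 0)) := by
    intro v
    rw [Finset.sum_eq_single (fun i => if i ∈ R then v i else y i)]
    · simp
    · intro b _ hb
      rw [if_neg (show ¬((fun i => if i ∈ R then v i else y i) = b) from fun h => hb h.symm)]
      ring
    · intro h; exact absurd (Finset.mem_univ _) h
  simp only [step2]
  rw [Finset.sum_comm]
  refine Finset.sum_congr rfl fun x _ => ?_
  rw [← Finset.mul_sum, sum_merge, K]
  congr 2
  refine if_congr ?_ rfl rfl
  constructor
  · intro h i hi; exact (h i hi).symm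
  · intro h i hi; exact (h i hi).symm

lemma key_lemma (p : Fin n → ℝ)
    (hdep : ∀ j (x y : Fin n → Bool), (∀ i ∈ var j, x i = y i) → c j x = c j y)
    (hextremal : ∀ i j, i ≠ j →
      var i ∩ var j = ∅ ∨ ∀ x : Fin n → Bool, c i x = true ∨ c j x = true)
    (S : Finset (Fin L)) (hvar : ∀ j ∈ S, (var j).Nonempty) (y : Fin n → Bool) :
    ∑ x : Fin n → Bool, (if Vio c x = S then nu p x * K p (Rset var S) x y else 0)
      = (if ∀ j, c j y = false → (var j ∩ Rset var S).Nonempty then (1:ℝ) else 0) *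
          (qS p c S * nu p y) := by
  have hterm : ∀ x : Fin n → Bool,
      (if Vio c x = S then nu p x * K p (Rset var S) x y else 0)
      = (if ∀ j, c j y = false → (var j ∩ Rset var S).Nonempty then (1:ℝ) else 0) *
        ((if ∀ j ∈ S, c j x = false then (1:ℝ) else 0) *
          ((if ∀ i, i ∉ Rset var S → x i = y i then (1:ℝ) else 0) *
            ∏ i ∈ Rset var S, wt p i (x i)) * nu p y) := by
    intro x
    by_cases hxy : ∀ i, i ∉ Rset var S → x i = y i
    · have hiff := vio_char hdep hextremal S hvar x y hxy
      simp only [hiff]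
      rw [if_pos hxy, one_mul]
      by_cases hA : ∀ j ∈ S, c j x = false
      · by_cases hB : ∀ j, c j y = false → (var j ∩ Rset var S).Nonempty
        · rw [if_pos ⟨hA, hB⟩, if_pos hB, if_pos hA, nu_mul_K, if_pos hxy]
          ring
        · rw [if_neg (fun h => hB h.2), if_neg hB]; ring
      · rw [if_neg (fun h => hA h.1), if_neg hA]; ring
    · rw [nu_mul_K, if_neg hxy]
      by_cases hV : Vio c x = S
      · rw [if_pos hV]; ring
      · rw [if_neg hV]; ring
  simp only [hterm]
  rw [← Finset.mul_sum]
  congr 1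
  rw [← Finset.sum_mul, sum_fiber_weight p hdep S y]


lemma stateAt_zero (u : ℕ → Fin n → Bool) : stateAt c var u 0 = u 0 := by rw [stateAt]

lemma stateAt_succ (u : ℕ → Fin n → Bool) (t : ℕ) :
    stateAt c var u (t + 1) = fun i =>
      if i ∈ resampleSet c var (stateAt c var u t) then u (t + 1) i
      else stateAt c var u t i := by rw [stateAt]

lemma stateAt_congr (u u' : ℕ → Fin n → Bool) (t : ℕ)
    (h : ∀ r, r ≤ t → u r = u' r) : stateAt c var u t = stateAt c var u' t := by
  induction t with
  | zero => rw [stateAt_zero, stateAt_zero]; exact h 0 le_rfl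
  | succ t ih =>
    have hst := ih fun r hr => h r (hr.trans (Nat.le_succ t))
    rw [stateAt_succ, stateAt_succ, hst, h (t + 1) le_rfl]

lemma extTape_snoc_le {t : ℕ} (w' : Fin (t + 1) → Fin n → Bool) (z : Fin n → Bool)
    (r : ℕ) (hr : r ≤ t) : extTape (Fin.snoc w' z) r = extTape w' r := by
  unfold extTape
  rw [dif_pos (show r < t + 2 by omega), dif_pos (show r < t + 1 by omega)]
  have : (⟨r, show r < t + 2 by omega⟩ : Fin (t + 2))
      = Fin.castSucc ⟨r, show r < t + 1 by omega⟩ := rfl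
  rw [this, Fin.snoc_castSucc]

lemma extTape_snoc_last {t : ℕ} (w' : Fin (t + 1) → Fin n → Bool) (z : Fin n → Bool) :
    extTape (Fin.snoc w' z) (t + 1) = z := by
  unfold extTape
  rw [dif_pos (show t + 1 < t + 2 by omega)]
  have : (⟨t + 1, show t + 1 < t + 2 by omega⟩ : Fin (t + 2)) = Fin.last (t + 1) := rfl
  rw [this, Fin.snoc_last]

lemma stateAt_snoc {t : ℕ} (w' : Fin (t + 1) → Fin n → Bool) (z : Fin n → Bool)
    (r : ℕ) (hr : r ≤ t) :
    stateAt c var (extTape (Fin.snoc w' z)) r = stateAt c var (extTape w') r :=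
  stateAt_congr _ _ r fun s hs => extTape_snoc_le w' z s (hs.trans hr)

lemma stateAt_snoc_succ {t : ℕ} (w' : Fin (t + 1) → Fin n → Bool) (z : Fin n → Bool) :
    stateAt c var (extTape (Fin.snoc w' z)) (t + 1) = fun i =>
      if i ∈ Rset var (Vio c (stateAt c var (extTape w') t)) then z i
      else stateAt c var (extTape w') t i := by
  rw [stateAt_succ, stateAt_snoc w' z t le_rfl, extTape_snoc_last, rs_eq]

lemma vio_nonempty (x : Fin n → Bool) :
    (Vio c x).Nonempty ↔ ∃ j, c j x = false := by
  simp [Vio, Finset.filter_nonempty_iff]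

lemma FF_zero (p : Fin n → ℝ) (x : Fin n → Bool) : FF p c var 0 x = nu p x := by
  rw [FF]
  rw [← Equiv.sum_comp (Equiv.funUnique (Fin 1) (Fin n → Bool)).symm]
  have h : ∀ z : Fin n → Bool,
      tapeProb p ((Equiv.funUnique (Fin 1) (Fin n → Bool)).symm z)
          * (if ((∀ s : Fin 1, (s : ℕ) < 0 → ∃ j, c j (stateAt c var
              (extTape ((Equiv.funUnique (Fin 1) (Fin n → Bool)).symm z)) (s : ℕ)) = false) ∧
            stateAt c var (extTape ((Equiv.funUnique (Fin 1) (Fin n → Bool)).symm z)) 0 = x)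
            then (1:ℝ) else 0)
        = nu p z * (if z = x then (1:ℝ) else 0) := by
    intro z
    have h1 : tapeProb p ((Equiv.funUnique (Fin 1) (Fin n → Bool)).symm z) = nu p z := by
      rw [tapeProb_eq]
      simp [Equiv.funUnique]
    have h2 : stateAt c var (extTape ((Equiv.funUnique (Fin 1) (Fin n → Bool)).symm z)) 0 = z := by
      rw [stateAt_zero]
      unfold extTape
      rw [dif_pos (show 0 < 1 by omega)]
      simp [Equiv.funUnique]
    rw [h1, h2]
    congr 1
    refine if_congr ?_ rfl rfl
    constructor
    · rintro ⟨-, h⟩; exact h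
    · intro h; exact ⟨fun s hs => absurd hs (Nat.not_lt_zero _), h⟩
  simp only [h]
  rw [Finset.sum_eq_single x]
  · simp
  · intro b _ hb; rw [if_neg hb]; ring
  · intro h; exact absurd (Finset.mem_univ _) h

lemma FF_succ (p : Fin n → ℝ) (t : ℕ) (y : Fin n → Bool) :
    FF p c var (t + 1) y
      = ∑ x : Fin n → Bool, (if (Vio c x).Nonempty
          then FF p c var t x * K p (Rset var (Vio c x)) x y else 0) := by
  rw [FF]
  rw [← Equiv.sum_comp (Fin.snocEquiv (fun _ : Fin (t + 2) => Fin n → Bool))]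
  rw [Fintype.sum_prod_type]
  have hG : ∀ (z : Fin n → Bool) (w' : Fin (t + 1) → Fin n → Bool),
      tapeProb p (Fin.snocEquiv (fun _ : Fin (t + 2) => Fin n → Bool) (z, w'))
        * (if ((∀ s : Fin (t + 2), (s : ℕ) < t + 1 →
              ∃ j, c j (stateAt c var (extTape (Fin.snocEquiv
                (fun _ : Fin (t + 2) => Fin n → Bool) (z, w'))) (s : ℕ)) = false) ∧
            stateAt c var (extTape (Fin.snocEquiv
              (fun _ : Fin (t + 2) => Fin n → Bool) (z, w'))) (t + 1) = y)
          then (1:ℝ) else 0)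
      = (tapeProb p w' * (if ((∀ s : Fin (t + 1), (s : ℕ) < t →
              ∃ j, c j (stateAt c var (extTape w') (s : ℕ)) = false) ∧
            (Vio c (stateAt c var (extTape w') t)).Nonempty) then (1:ℝ) else 0))
        * (nu p z * (if (fun i =>
            if i ∈ Rset var (Vio c (stateAt c var (extTape w') t)) then z i
            else stateAt c var (extTape w') t i) = y then (1:ℝ) else 0)) := by
    intro z w'
    have hsnoc : Fin.snocEquiv (fun _ : Fin (t + 2) => Fin n → Bool) (z, w') = Fin.snoc w' z := rfl
    rw [hsnoc]
    have ha : tapeProb p (Fin.snoc w' z) = tapeProb p w' * nu p z := by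
      rw [tapeProb_eq, tapeProb_eq, Fin.prod_univ_castSucc]
      simp only [Fin.snoc_castSucc, Fin.snoc_last]
      try rfl
    have hcond : ((∀ s : Fin (t + 2), (s : ℕ) < t + 1 →
          ∃ j, c j (stateAt c var (extTape (Fin.snoc w' z)) (s : ℕ)) = false) ∧
        stateAt c var (extTape (Fin.snoc w' z)) (t + 1) = y)
      ↔ (((∀ s : Fin (t + 1), (s : ℕ) < t →
            ∃ j, c j (stateAt c var (extTape w') (s : ℕ)) = false) ∧
          (Vio c (stateAt c var (extTape w') t)).Nonempty) ∧
        (fun i => if i ∈ Rset var (Vio c (stateAt c var (extTape w') t)) then z i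
          else stateAt c var (extTape w') t i) = y) := by
      rw [stateAt_snoc_succ]
      constructor
      · rintro ⟨H, hy⟩
        refine ⟨⟨fun s hs => ?_, ?_⟩, hy⟩
        · have := H ⟨(s : ℕ), by omega⟩ (by simpa using Nat.lt_succ_of_lt hs)
          rwa [show ((⟨(s : ℕ), by omega⟩ : Fin (t + 2)) : ℕ) = (s : ℕ) from rfl,
            stateAt_snoc w' z _ (by omega)] at this
        · rw [vio_nonempty]
          have := H ⟨t, by omega⟩ (by simp)
          rwa [show ((⟨t, by omega⟩ : Fin (t + 2)) : ℕ) = t from rfl,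
            stateAt_snoc w' z t le_rfl] at this
      · rintro ⟨⟨H1, H2⟩, hy⟩
        refine ⟨fun s hs => ?_, hy⟩
        have hst : (s : ℕ) ≤ t := by omega
        rw [stateAt_snoc w' z _ hst]
        rcases Nat.lt_or_ge (s : ℕ) t with h | h
        · exact H1 ⟨(s : ℕ), by omega⟩ h
        · have : (s : ℕ) = t := le_antisymm hst h
          rw [this]
          exact (vio_nonempty _).mp H2
    have hsplit : (if ((∀ s : Fin (t + 2), (s : ℕ) < t + 1 →
          ∃ j, c j (stateAt c var (extTape (Fin.snoc w' z)) (s : ℕ)) = false) ∧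
        stateAt c var (extTape (Fin.snoc w' z)) (t + 1) = y) then (1:ℝ) else 0)
        = (if ((∀ s : Fin (t + 1), (s : ℕ) < t →
              ∃ j, c j (stateAt c var (extTape w') (s : ℕ)) = false) ∧
            (Vio c (stateAt c var (extTape w') t)).Nonempty) then (1:ℝ) else 0)
          * (if (fun i => if i ∈ Rset var (Vio c (stateAt c var (extTape w') t)) then z i
              else stateAt c var (extTape w') t i) = y then (1:ℝ) else 0) := by
      rw [ind_mul_ind]
      exact if_congr hcond rfl rfl
    rw [ha, hsplit]
    ring
  simp only [hG]
  rw [Finset.sum_comm]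
  have hinner : ∀ w' : Fin (t + 1) → Fin n → Bool,
      ∑ z : Fin n → Bool,
        (tapeProb p w' * (if ((∀ s : Fin (t + 1), (s : ℕ) < t →
              ∃ j, c j (stateAt c var (extTape w') (s : ℕ)) = false) ∧
            (Vio c (stateAt c var (extTape w') t)).Nonempty) then (1:ℝ) else 0))
        * (nu p z * (if (fun i =>
            if i ∈ Rset var (Vio c (stateAt c var (extTape w') t)) then z i
            else stateAt c var (extTape w') t i) = y then (1:ℝ) else 0))
      = (tapeProb p w' * (if ((∀ s : Fin (t + 1), (s : ℕ) < t →
              ∃ j, c j (stateAt c var (extTape w') (s : ℕ)) = false) ∧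
            (Vio c (stateAt c var (extTape w') t)).Nonempty) then (1:ℝ) else 0))
        * K p (Rset var (Vio c (stateAt c var (extTape w') t)))
            (stateAt c var (extTape w') t) y := by
    intro w'
    rw [← Finset.mul_sum, sum_merge]
  simp only [hinner]
  have hrhs : ∀ x : Fin n → Bool,
      (if (Vio c x).Nonempty
        then FF p c var t x * K p (Rset var (Vio c x)) x y
        else 0)
      = ∑ w : Fin (t + 1) → (Fin n → Bool),
          (if (Vio c x).Nonempty
            then (tapeProb p w *
              (if ((∀ s : Fin (t + 1), (s : ℕ) < t →
                    ∃ j, c j (stateAt c var (extTape w) (s : ℕ)) = false) ∧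
                  stateAt c var (extTape w) t = x) then (1:ℝ) else 0))
                * K p (Rset var (Vio c x)) x y
            else 0) := by
    intro x
    by_cases h : (Vio c x).Nonempty
    · rw [if_pos h, FF, Finset.sum_mul]
      exact Finset.sum_congr rfl fun w _ => by rw [if_pos h]
    · rw [if_neg h]
      symm
      rw [Finset.sum_eq_zero]
      intro w _
      rw [if_neg h]
  simp only [hrhs]
  rw [Finset.sum_comm]
  refine Finset.sum_congr rfl fun w' _ => ?_
  rw [Finset.sum_eq_single (stateAt c var (extTape w') t)]
  · by_cases hne : (Vio c (stateAt c var (extTape w') t)).Nonempty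
    · rw [if_pos hne]
      by_cases hA : ∀ s : Fin (t + 1), (s : ℕ) < t →
          ∃ j, c j (stateAt c var (extTape w') (s : ℕ)) = false
      · rw [if_pos ⟨hA, hne⟩, if_pos ⟨hA, rfl⟩]
      · rw [if_neg (fun h => hA h.1), if_neg (fun h => hA h.1)]
        try ring
    · rw [if_neg hne, if_neg (fun h => hne h.2)]
      ring
  · intro b _ hb
    by_cases hne : (Vio c b).Nonempty
    · rw [if_pos hne, if_neg (fun h => hb h.2.symm)]
      ring
    · rw [if_neg hne]
  · intro h; exact absurd (Finset.mem_univ _) h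

lemma Bad_eq (p : Fin n → ℝ) (t : ℕ) :
    ∑ w : Fin (t + 1) → (Fin n → Bool),
        tapeProb p w *
          (if ∀ s : Fin (t + 1), ∃ j,
              c j (stateAt c var (extTape w) (s : ℕ)) = false
            then (1 : ℝ) else 0)
      = ∑ x : Fin n → Bool, (if (Vio c x).Nonempty then FF p c var t x else 0) := by
  have hrhs : ∀ x : Fin n → Bool,
      (if (Vio c x).Nonempty then FF p c var t x else 0)
      = ∑ w : Fin (t + 1) → (Fin n → Bool),
          (if (Vio c x).Nonempty then tapeProb p w *
            (if ((∀ s : Fin (t + 1), (s : ℕ) < t →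
                  ∃ j, c j (stateAt c var (extTape w) (s : ℕ)) = false) ∧
                stateAt c var (extTape w) t = x) then (1:ℝ) else 0)
            else 0) := by
    intro x
    by_cases h : (Vio c x).Nonempty
    · rw [if_pos h, FF]
      exact Finset.sum_congr rfl fun w _ => by rw [if_pos h]
    · rw [if_neg h]
      symm
      rw [Finset.sum_eq_zero]
      intro w _
      rw [if_neg h]
  simp only [hrhs]
  rw [Finset.sum_comm]
  refine Finset.sum_congr rfl fun w _ => ?_
  rw [Finset.sum_eq_single (stateAt c var (extTape w) t)]
  · have hiff : (∀ s : Fin (t + 1), ∃ j,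
          c j (stateAt c var (extTape w) (s : ℕ)) = false)
        ↔ ((∀ s : Fin (t + 1), (s : ℕ) < t →
            ∃ j, c j (stateAt c var (extTape w) (s : ℕ)) = false) ∧
          (Vio c (stateAt c var (extTape w) t)).Nonempty) := by
      constructor
      · intro H
        refine ⟨fun s _ => H s, ?_⟩
        rw [vio_nonempty]
        have := H ⟨t, by omega⟩
        rwa [show ((⟨t, by omega⟩ : Fin (t + 1)) : ℕ) = t from rfl] at this
      · rintro ⟨H1, H2⟩ s
        rcases Nat.lt_or_ge (s : ℕ) t with h | h
        · exact H1 s h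
        · have hst : (s : ℕ) = t := by omega
          rw [hst]
          exact (vio_nonempty _).mp H2
    by_cases hne : (Vio c (stateAt c var (extTape w) t)).Nonempty
    · rw [if_pos hne]
      by_cases hA : ∀ s : Fin (t + 1), (s : ℕ) < t →
          ∃ j, c j (stateAt c var (extTape w) (s : ℕ)) = false
      · rw [if_pos (hiff.mpr ⟨hA, hne⟩), if_pos ⟨hA, rfl⟩]
      · rw [if_neg (fun h => hA fun s hs => (hiff.mp h).1 s hs),
          if_neg (fun h => hA h.1)]
    · rw [if_neg hne, if_neg (fun h => hne (hiff.mp h).2)]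
      ring
  · intro b _ hb
    by_cases hne : (Vio c b).Nonempty
    · rw [if_pos hne, if_neg (fun h => hb h.2.symm)]
      ring
    · rw [if_neg hne]
  · intro h; exact absurd (Finset.mem_univ _) h


lemma qS_nonneg (p : Fin n → ℝ) (hp : ∀ i, 0 ≤ p i ∧ p i ≤ 1) (S : Finset (Fin L)) :
    0 ≤ qS p c S := by
  refine Finset.sum_nonneg fun x _ => ?_
  by_cases h : ∀ j ∈ S, c j x = false
  · rw [if_pos h]; exact nu_nonneg p hp x
  · rw [if_neg h]

lemma beta_nonneg (p : Fin n → ℝ) (hp : ∀ i, 0 ≤ p i ∧ p i ≤ 1) :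
    ∀ t (T : Finset (Fin L)), 0 ≤ beta p c var t T := by
  intro t
  induction t with
  | zero => intro T; rw [beta]; norm_num
  | succ t ih =>
    intro T
    rw [beta]
    refine Finset.sum_nonneg fun S _ => ?_
    by_cases h : (∃ x, Vio c x = S) ∧ S.Nonempty ∧
        (∀ j ∈ T, (var j ∩ Rset var S).Nonempty)
    · rw [if_pos h]; exact mul_nonneg (qS_nonneg p hp S) (ih S)
    · rw [if_neg h]

lemma beta_le_empty (p : Fin n → ℝ) (hp : ∀ i, 0 ≤ p i ∧ p i ≤ 1) :
    ∀ t (T : Finset (Fin L)), beta p c var t T ≤ beta p c var t ∅ := by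
  intro t
  induction t with
  | zero => intro T; rw [beta, beta]
  | succ t _ =>
    intro T
    rw [beta, beta]
    refine Finset.sum_le_sum fun S _ => ?_
    by_cases h : (∃ x, Vio c x = S) ∧ S.Nonempty ∧
        (∀ j ∈ T, (var j ∩ Rset var S).Nonempty)
    · rw [if_pos h, if_pos ⟨h.1, h.2.1, fun j hj => absurd hj (Finset.notMem_empty j)⟩]
    · rw [if_neg h]
      by_cases h' : (∃ x, Vio c x = S) ∧ S.Nonempty ∧
          (∀ j ∈ (∅ : Finset (Fin L)), (var j ∩ Rset var S).Nonempty)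
      · rw [if_pos h']
        exact mul_nonneg (qS_nonneg p hp S) (beta_nonneg p hp t S)
      · rw [if_neg h']

lemma hvar_ach
    (hdep : ∀ j (x y : Fin n → Bool), (∀ i ∈ var j, x i = y i) → c j x = c j y)
    (hsat : ∃ x0 : Fin n → Bool, ∀ j, c j x0 = true) (x : Fin n → Bool) :
    ∀ j ∈ Vio c x, (var j).Nonempty := by
  intro j hj
  by_contra h
  rw [Finset.not_nonempty_iff_eq_empty] at h
  obtain ⟨x0, hx0⟩ := hsat
  have heq : c j x = c j x0 :=
    hdep j x x0 fun i hi => absurd hi (by simp [h])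
  rw [mem_Vio] at hj
  rw [hj, hx0 j] at heq
  exact Bool.false_ne_true heq

lemma invariant (p : Fin n → ℝ)
    (hdep : ∀ j (x y : Fin n → Bool), (∀ i ∈ var j, x i = y i) → c j x = c j y)
    (hextremal : ∀ i j, i ≠ j →
      var i ∩ var j = ∅ ∨ ∀ x : Fin n → Bool, c i x = true ∨ c j x = true)
    (hsat : ∃ x0 : Fin n → Bool, ∀ j, c j x0 = true) :
    ∀ t (x : Fin n → Bool), FF p c var t x = beta p c var t (Vio c x) * nu p x := by
  intro t
  induction t with
  | zero => intro x; rw [FF_zero, beta, one_mul]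
  | succ t ih =>
    intro y
    rw [FF_succ]
    have hterm : ∀ x : Fin n → Bool,
        (if (Vio c x).Nonempty then FF p c var t x * K p (Rset var (Vio c x)) x y else 0)
          = ∑ S : Finset (Fin L), (if Vio c x = S then
              (if S.Nonempty then beta p c var t S * (nu p x * K p (Rset var S) x y) else 0)
              else 0) := by
      intro x
      rw [Finset.sum_eq_single (Vio c x)]
      · rw [if_pos rfl, ih]
        by_cases h : (Vio c x).Nonempty
        · rw [if_pos h, if_pos h]; ring
        · rw [if_neg h, if_neg h]
      · intro S _ hS
        rw [if_neg fun h => hS h.symm]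
      · intro h; exact absurd (Finset.mem_univ _) h
    simp only [hterm]
    rw [Finset.sum_comm, beta, Finset.sum_mul]
    refine Finset.sum_congr rfl fun S _ => ?_
    by_cases hach : ∃ x, Vio c x = S
    · by_cases hSne : S.Nonempty
      · obtain ⟨x1, hx1⟩ := hach
        have hvarS : ∀ j ∈ S, (var j).Nonempty := by
          rw [← hx1]; exact hvar_ach hdep hsat x1
        have hstep : ∀ x : Fin n → Bool,
            (if Vio c x = S then
              (if S.Nonempty then beta p c var t S * (nu p x * K p (Rset var S) x y) else 0)
              else 0)
            = beta p c var t S * (if Vio c x = S then nu p x * K p (Rset var S) x y else 0) := by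
          intro x
          by_cases h : Vio c x = S
          · rw [if_pos h, if_pos h, if_pos hSne]
          · rw [if_neg h, if_neg h, mul_zero]
        simp only [hstep]
        rw [← Finset.mul_sum, key_lemma p hdep hextremal S hvarS y]
        have hcc : (∀ j ∈ Vio c y, (var j ∩ Rset var S).Nonempty)
            ↔ (∀ j, c j y = false → (var j ∩ Rset var S).Nonempty) := by
          constructor
          · intro h j hj; exact h j (mem_Vio.mpr hj)
          · intro h j hj; exact h j (mem_Vio.mp hj)
        by_cases hcon : ∀ j, c j y = false → (var j ∩ Rset var S).Nonempty
        · rw [if_pos hcon, if_pos ⟨⟨x1, hx1⟩, hSne, hcc.mpr hcon⟩]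
          ring
        · rw [if_neg hcon, if_neg (fun h => hcon (hcc.mp h.2.2))]
          ring
      · rw [if_neg (fun h => hSne h.2.1), zero_mul]
        refine Finset.sum_eq_zero fun x _ => ?_
        by_cases h : Vio c x = S
        · rw [if_pos h, if_neg hSne]
        · rw [if_neg h]
    · rw [if_neg (fun h => hach h.1), zero_mul]
      refine Finset.sum_eq_zero fun x _ => ?_
      rw [if_neg (fun h => hach ⟨x, h⟩)]

lemma FF_nonneg (p : Fin n → ℝ) (hp : ∀ i, 0 ≤ p i ∧ p i ≤ 1) (t : ℕ) (x : Fin n → Bool) :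
    0 ≤ FF p c var t x := by
  refine Finset.sum_nonneg fun w _ => mul_nonneg ?_ ?_
  · rw [tapeProb_eq]
    exact Finset.prod_nonneg fun s _ => nu_nonneg p hp (w s)
  · positivity

end PRS

/-- Guo–Jiang–Liu: for an extremal constraint system whose satisfying set has
positive product measure, partial rejection sampling terminates with
probability 1 and its output distribution is exactly the product distribution
conditioned on all constraints being satisfied. -/
theorem partial_rejection_sampling_correct (n L : ℕ)
    (p : Fin n → ℝ) (hp : ∀ i, 0 ≤ p i ∧ p i ≤ 1)
    (c : Fin L → (Fin n → Bool) → Bool) (var : Fin L → Finset (Fin n))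
    (hdep : ∀ j (x y : Fin n → Bool), (∀ i ∈ var j, x i = y i) → c j x = c j y)
    (hextremal : ∀ i j, i ≠ j →
      var i ∩ var j = ∅ ∨ ∀ x : Fin n → Bool, c i x = true ∨ c j x = true)
    (μ : (Fin n → Bool) → ℝ)
    (hμ : ∀ x, μ x = ∏ i, (if x i then p i else 1 - p i))
    (hqpos : 0 < ∑ x ∈ Finset.univ.filter
      (fun x : Fin n → Bool => ∀ j, c j x = true), μ x) :
    Tendsto (fun t : ℕ => ∑ w : Fin (t + 1) → (Fin n → Bool),
        tapeProb p w *
          (if ∀ s : Fin (t + 1), ∃ j,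
              c j (stateAt c var (extTape w) (s : ℕ)) = false
            then (1 : ℝ) else 0))
      atTop (nhds 0) ∧
    ∀ x : Fin n → Bool, (∀ j, c j x = true) →
      (∑' t : ℕ, ∑ w : Fin (t + 1) → (Fin n → Bool),
        tapeProb p w *
          (if ((∀ s : Fin (t + 1), (s : ℕ) < t →
                ∃ j, c j (stateAt c var (extTape w) (s : ℕ)) = false) ∧
              stateAt c var (extTape w) t = x)
            then (1 : ℝ) else 0))
      = μ x / ∑ x' ∈ Finset.univ.filter
          (fun x' : Fin n → Bool => ∀ j, c j x' = true), μ x' := by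
  have hμν : ∀ x, μ x = PRS.nu p x := by
    intro x; rw [hμ]; rfl
  set Z : ℝ := ∑ x' ∈ Finset.univ.filter
      (fun x' : Fin n → Bool => ∀ j, c j x' = true), μ x' with hZ
  have hZpos : 0 < Z := hqpos
  have hsat : ∃ x0 : Fin n → Bool, ∀ j, c j x0 = true := by
    have hne : (Finset.univ.filter (fun x : Fin n → Bool => ∀ j, c j x = true)).Nonempty := by
      by_contra hne
      rw [Finset.not_nonempty_iff_eq_empty] at hne
      rw [hZ, hne, Finset.sum_empty] at hZpos
      exact lt_irrefl 0 hZpos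
    obtain ⟨x0, hx0⟩ := hne
    exact ⟨x0, (Finset.mem_filter.mp hx0).2⟩
  have hZν : Z = ∑ x : Fin n → Bool, (if PRS.Vio c x = ∅ then PRS.nu p x else 0) := by
    rw [hZ, Finset.sum_filter]
    refine Finset.sum_congr rfl fun x _ => ?_
    have hiff : (∀ j, c j x = true) ↔ PRS.Vio c x = ∅ := by
      simp [PRS.Vio, Finset.filter_eq_empty_iff]
    by_cases h : ∀ j, c j x = true
    · rw [if_pos h, if_pos (hiff.mp h), hμν]
    · rw [if_neg h, if_neg (fun h' => h (hiff.mpr h'))]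
  have hZle1 : Z ≤ 1 := by
    rw [hZν]
    calc ∑ x : Fin n → Bool, (if PRS.Vio c x = ∅ then PRS.nu p x else 0)
        ≤ ∑ x : Fin n → Bool, PRS.nu p x := by
          refine Finset.sum_le_sum fun x _ => ?_
          by_cases h : PRS.Vio c x = ∅
          · rw [if_pos h]
          · rw [if_neg h]; exact PRS.nu_nonneg p hp x
      _ = 1 := PRS.sum_nu p
  have hinv := PRS.invariant (c := c) (var := var) p hdep hextremal hsat
  set P : ℕ → ℝ := fun t => ∑ x : Fin n → Bool, PRS.FF p c var t x with hPdef
  have hP0 : P 0 = 1 := by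
    rw [hPdef]
    simp only [PRS.FF_zero]
    exact PRS.sum_nu p
  have hstep1 : ∀ t, P (t + 1)
      = ∑ x : Fin n → Bool, (if (PRS.Vio c x).Nonempty then PRS.FF p c var t x else 0) := by
    intro t
    rw [hPdef]
    simp only [PRS.FF_succ]
    rw [Finset.sum_comm]
    refine Finset.sum_congr rfl fun x _ => ?_
    by_cases h : (PRS.Vio c x).Nonempty
    · simp only [if_pos h]
      rw [← Finset.mul_sum, PRS.sum_K, mul_one]
    · simp only [if_neg h]
      exact Finset.sum_const_zero
  have hstep2 : ∀ t, (∑ x : Fin n → Bool,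
        (if (PRS.Vio c x).Nonempty then PRS.FF p c var t x else 0))
      = P t - PRS.beta p c var t ∅ * Z := by
    intro t
    have hterm : ∀ x : Fin n → Bool,
        (if (PRS.Vio c x).Nonempty then PRS.FF p c var t x else 0)
          = PRS.FF p c var t x
            - (if PRS.Vio c x = ∅ then PRS.beta p c var t ∅ * PRS.nu p x else 0) := by
      intro x
      by_cases h : PRS.Vio c x = ∅
      · rw [if_neg (by rw [h]; exact Finset.not_nonempty_empty), if_pos h,
          hinv t x, h]
        ring
      · rw [if_pos (Finset.nonempty_iff_ne_empty.mpr h), if_neg h]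
        ring
    simp only [hterm]
    rw [Finset.sum_sub_distrib]
    congr 1
    rw [hZν, Finset.mul_sum]
    refine Finset.sum_congr rfl fun x _ => ?_
    by_cases h : PRS.Vio c x = ∅
    · rw [if_pos h, if_pos h]
    · rw [if_neg h, if_neg h, mul_zero]
  have hPsucc : ∀ t, P (t + 1) = P t - PRS.beta p c var t ∅ * Z := by
    intro t; rw [hstep1 t, hstep2 t]
  have hPnonneg : ∀ t, 0 ≤ P t :=
    fun t => Finset.sum_nonneg fun x _ => PRS.FF_nonneg p hp t x
  have hPle : ∀ t, P t ≤ PRS.beta p c var t ∅ := by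
    intro t
    calc P t = ∑ x : Fin n → Bool, PRS.beta p c var t (PRS.Vio c x) * PRS.nu p x :=
          Finset.sum_congr rfl fun x _ => hinv t x
      _ ≤ ∑ x : Fin n → Bool, PRS.beta p c var t ∅ * PRS.nu p x :=
          Finset.sum_le_sum fun x _ => mul_le_mul_of_nonneg_right
            (PRS.beta_le_empty p hp t _) (PRS.nu_nonneg p hp x)
      _ = PRS.beta p c var t ∅ := by rw [← Finset.mul_sum, PRS.sum_nu, mul_one]
  have h1Z0 : (0:ℝ) ≤ 1 - Z := by linarith
  have h1Z1 : 1 - Z < 1 := by linarith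
  have hgeo : ∀ t, P t ≤ (1 - Z) ^ t := by
    intro t
    induction t with
    | zero => rw [pow_zero, hP0]
    | succ t ih =>
      have hb : P t * Z ≤ PRS.beta p c var t ∅ * Z :=
        mul_le_mul_of_nonneg_right (hPle t) hZpos.le
      calc P (t + 1) = P t - PRS.beta p c var t ∅ * Z := hPsucc t
        _ ≤ P t - P t * Z := by linarith
        _ = P t * (1 - Z) := by ring
        _ ≤ (1 - Z) ^ t * (1 - Z) := mul_le_mul_of_nonneg_right ih h1Z0
        _ = (1 - Z) ^ (t + 1) := by ring
  have hPlim : Tendsto P atTop (nhds 0) :=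
    squeeze_zero hPnonneg hgeo (tendsto_pow_atTop_nhds_zero_of_lt_one h1Z0 h1Z1)
  constructor
  · have hfun : ∀ t : ℕ, (∑ w : Fin (t + 1) → (Fin n → Bool),
        tapeProb p w *
          (if ∀ s : Fin (t + 1), ∃ j,
              c j (stateAt c var (extTape w) (s : ℕ)) = false
            then (1 : ℝ) else 0)) = P (t + 1) := by
      intro t
      rw [PRS.Bad_eq p t, ← hstep1 t]
    refine Tendsto.congr (fun t => (hfun t).symm) ?_
    refine squeeze_zero (fun t => hPnonneg (t + 1)) (fun t => ?_)
      (tendsto_pow_atTop_nhds_zero_of_lt_one h1Z0 h1Z1)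
    exact (hgeo (t + 1)).trans (pow_le_pow_of_le_one h1Z0 (by linarith) (Nat.le_succ t))
  · intro x hx
    have hVx : PRS.Vio c x = ∅ := by
      simp [PRS.Vio, Finset.filter_eq_empty_iff, hx]
    have hFFx : ∀ t, PRS.FF p c var t x = PRS.beta p c var t ∅ * PRS.nu p x := by
      intro t; rw [hinv t x, hVx]
    have htel : ∀ T, ∑ t ∈ Finset.range T, (PRS.beta p c var t ∅ * Z) = 1 - P T := by
      intro T
      induction T with
      | zero => rw [Finset.range_zero, Finset.sum_empty, hP0]; ring
      | succ T ih => rw [Finset.sum_range_succ, ih, hPsucc T]; ring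
    have hbnn : ∀ t, 0 ≤ PRS.beta p c var t ∅ * Z :=
      fun t => mul_nonneg (PRS.beta_nonneg p hp t ∅) hZpos.le
    have hsum1 : HasSum (fun t => PRS.beta p c var t ∅ * Z) 1 := by
      rw [hasSum_iff_tendsto_nat_of_nonneg hbnn]
      simp only [htel]
      have h2 : Tendsto (fun T => (1:ℝ) - P T) atTop (nhds (1 - 0)) :=
        tendsto_const_nhds.sub hPlim
      simpa using h2
    have hFFsum : HasSum (fun t => PRS.FF p c var t x) (PRS.nu p x / Z) := by
      have heq : (fun t => PRS.FF p c var t x)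
          = fun t => (PRS.beta p c var t ∅ * Z) * (PRS.nu p x / Z) := by
        funext t
        rw [hFFx t]
        field_simp
      rw [heq]
      have h2 := hsum1.mul_right (PRS.nu p x / Z)
      rwa [one_mul] at h2
    have hfin : (∑' t : ℕ, PRS.FF p c var t x) = PRS.nu p x / Z := hFFsum.tsum_eq
    rw [show (∑' t : ℕ, ∑ w : Fin (t + 1) → (Fin n → Bool),
        tapeProb p w *
          (if ((∀ s : Fin (t + 1), (s : ℕ) < t →
                ∃ j, c j (stateAt c var (extTape w) (s : ℕ)) = false) ∧
              stateAt c var (extTape w) t = x)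
            then (1 : ℝ) else 0)) = ∑' t : ℕ, PRS.FF p c var t x from rfl]
    rw [hfin, hμν x]
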